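/- Fix α ∈ [0,1) and let T be any monotone total order on the set Ω of nondecreasing n-tuples over S; assume 𝒢(Ω(z, T'), α) is nonempty for all z ∈ Ω and all total orders T' considered. Let x ∈ Ω and let s, s' ∈ S be such that the constant tuples satisfy 𝑺 ≤_T x ≤_T 𝑺', where 𝑺 = (s,…,s) and 𝑺' = (s',…,s'). Then B_{T_h}^*(𝑺) ≤ B_T^*(x) ≤ B_{T_ℓ}^*(𝑺'). -/

import Mathlib

noncomputable section

/-- Distributions on the finite support `S`, viewed as points of the probability
simplex inside `EuclideanSpace ℝ S` (Euclidean metric). -/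
def distSet (S : Finset ℝ) : Set (EuclideanSpace ℝ ↥S) :=
  {F | (∀ s, 0 ≤ F s) ∧ ∑ s, F s = 1}

/-- Mean of a distribution on `S`. -/
def distMean (S : Finset ℝ) (F : EuclideanSpace ℝ ↥S) : ℝ :=
  ∑ s : ↥S, F s * (s : ℝ)

open Classical in
/-- `P_F[A]`: probability of a set `A` of `n`-tuples under `n` i.i.d. draws from `F`. -/
def probOf (S : Finset ℝ) (n : ℕ) (F : EuclideanSpace ℝ ↥S)
    (A : Set (Fin n → ↥S)) : ℝ :=
  ∑ y : Fin n → ↥S, if y ∈ A then ∏ i, F (y i) else 0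

/-- The interior likely set `𝒢(A, α)`. -/
def intLikely (S : Finset ℝ) (n : ℕ) (A : Set (Fin n → ↥S)) (α : ℝ) :
    Set (EuclideanSpace ℝ ↥S) :=
  {F | F ∈ distSet S ∧ α < probOf S n F A}

/-- The likely set `𝒻(A, α)`: the closure of `𝒢(A, α)`. -/
def likely (S : Finset ℝ) (n : ℕ) (A : Set (Fin n → ↥S)) (α : ℝ) :
    Set (EuclideanSpace ℝ ↥S) :=
  closure (intLikely S n A α)

/-- `Ω`: the set of nondecreasing (`sorted`) `n`-tuples over `S`. -/
def sortedTuples (S : Finset ℝ) (n : ℕ) : Set (Fin n → ↥S) :=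
  {x | Monotone x}

/-- The sorted version of a tuple. -/
def sortTup (S : Finset ℝ) (n : ℕ) (y : Fin n → ↥S) : Fin n → ↥S :=
  y ∘ Tuple.sort y

/-- Probability of a set `A ⊆ Ω` of sorted tuples, identifying tuples with
their sorted versions. -/
def probSorted (S : Finset ℝ) (n : ℕ) (F : EuclideanSpace ℝ ↥S)
    (A : Set (Fin n → ↥S)) : ℝ :=
  probOf S n F {y | sortTup S n y ∈ A}

/-- Interior likely set for a set of sorted tuples. -/
def intLikelySorted (S : Finset ℝ) (n : ℕ) (A : Set (Fin n → ↥S)) (α : ℝ) :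
    Set (EuclideanSpace ℝ ↥S) :=
  {F | F ∈ distSet S ∧ α < probSorted S n F A}

/-- Likely set for a set of sorted tuples. -/
def likelySorted (S : Finset ℝ) (n : ℕ) (A : Set (Fin n → ↥S)) (α : ℝ) :
    Set (EuclideanSpace ℝ ↥S) :=
  closure (intLikelySorted S n A α)

/-- Upper set `Ω(x, R)` of `x` under a relation `R` on `Ω`. -/
def upperSet (S : Finset ℝ) (n : ℕ) (r : (Fin n → ↥S) → (Fin n → ↥S) → Prop)
    (x : Fin n → ↥S) : Set (Fin n → ↥S) :=
  {y ∈ sortedTuples S n | r x y}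

/-- Pessimal bound `B_R^*(x) = inf {E[F] : F ∈ 𝒻(Ω(x,R), α)}`. -/
def pessimal (S : Finset ℝ) (n : ℕ) (r : (Fin n → ↥S) → (Fin n → ↥S) → Prop)
    (α : ℝ) (x : Fin n → ↥S) : ℝ :=
  sInf (distMean S '' likelySorted S n (upperSet S n r x) α)

/-- Low lexicographic order: `x ≤_{T_ℓ} y` iff `x = y` or `x i < y i` at the
smallest index `i` where `x` and `y` differ. -/
def lexLowLE {n : ℕ} {α : Type*} [LinearOrder α] (x y : Fin n → α) : Prop :=
  x = y ∨ ∃ i, x i < y i ∧ ∀ j, j < i → x j = y j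

/-- High lexicographic order: `x ≤_{T_h} y` iff `x = y` or `x i < y i` at the
largest index `i` where `x` and `y` differ. -/
def lexHighLE {n : ℕ} {α : Type*} [LinearOrder α] (x y : Fin n → α) : Prop :=
  x = y ∨ ∃ i, x i < y i ∧ ∀ j, i < j → x j = y j

lemma distSet_isClosed (S : Finset ℝ) : IsClosed (distSet S) := by
  have h1 : IsClosed {F : EuclideanSpace ℝ ↥S | ∀ s, 0 ≤ F s} := by
    have : {F : EuclideanSpace ℝ ↥S | ∀ s, 0 ≤ F s} = ⋂ s, {F | 0 ≤ F s} := by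
      ext F; simp [Set.mem_iInter]
    rw [this]
    exact isClosed_iInter fun s =>
      isClosed_le continuous_const (EuclideanSpace.proj s).continuous
  have h2 : IsClosed {F : EuclideanSpace ℝ ↥S | ∑ s, F s = 1} :=
    isClosed_eq (continuous_finset_sum _ fun s _ => (EuclideanSpace.proj s).continuous)
      continuous_const
  exact h1.inter h2

lemma distMean_ge (S : Finset ℝ) (hS : S.Nonempty) {F : EuclideanSpace ℝ ↥S}
    (hF : F ∈ distSet S) : S.min' hS ≤ distMean S F := by
  obtain ⟨h0, h1⟩ := hF
  calc S.min' hS = ∑ s : ↥S, F s * S.min' hS := by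
        rw [← Finset.sum_mul, h1, one_mul]
    _ ≤ ∑ s : ↥S, F s * (s : ℝ) :=
        Finset.sum_le_sum fun s _ =>
          mul_le_mul_of_nonneg_left (S.min'_le s s.2) (h0 s)

lemma probSorted_mono (S : Finset ℝ) (n : ℕ) {A B : Set (Fin n → ↥S)} (hAB : A ⊆ B)
    {F : EuclideanSpace ℝ ↥S} (hF : F ∈ distSet S) :
    probSorted S n F A ≤ probSorted S n F B := by
  classical
  unfold probSorted probOf
  apply Finset.sum_le_sum
  intro y _
  by_cases h : sortTup S n y ∈ A
  · simp only [Set.mem_setOf_eq, h, hAB h, if_true, le_refl]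
  · by_cases h2 : sortTup S n y ∈ B <;>
      simp [Set.mem_setOf_eq, h, h2, Finset.prod_nonneg fun i _ => hF.1 (y i)]

lemma pessimal_anti (S : Finset ℝ) (hS : S.Nonempty) (n : ℕ) {α : ℝ}
    {r r' : (Fin n → ↥S) → (Fin n → ↥S) → Prop} {x x' : Fin n → ↥S}
    (hne : (intLikelySorted S n (upperSet S n r x) α).Nonempty)
    (hsub : upperSet S n r x ⊆ upperSet S n r' x') :
    pessimal S n r' α x' ≤ pessimal S n r α x := by
  have hlsub : likelySorted S n (upperSet S n r x) α ⊆
      likelySorted S n (upperSet S n r' x') α := by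
    apply closure_mono
    rintro F ⟨hFd, hFp⟩
    exact ⟨hFd, lt_of_lt_of_le hFp (probSorted_mono S n hsub hFd)⟩
  apply csInf_le_csInf
  · refine ⟨S.min' hS, ?_⟩
    rintro m ⟨F, hF, rfl⟩
    have hFd : F ∈ distSet S :=
      closure_minimal (fun G hG => hG.1) (distSet_isClosed S) hF
    exact distMean_ge S hS hFd
  · exact ((hne.mono subset_closure).image _)
  · exact Set.image_mono hlsub

/-- for a monotone total order `T` on `Ω`, a sample `x ∈ Ω`, and
constant tuples `𝑺 ≤_T x ≤_T 𝑺'`, we have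
`B_{T_h}^*(𝑺) ≤ B_T^*(x) ≤ B_{T_ℓ}^*(𝑺')`. -/
theorem stmt12 (S : Finset ℝ) (hS : S.Nonempty) (n : ℕ) (hn : 1 ≤ n)
    (α : ℝ) (hα0 : 0 ≤ α) (hα1 : α < 1)
    (t : (Fin n → ↥S) → (Fin n → ↥S) → Prop)
    (hrefl : ∀ x ∈ sortedTuples S n, t x x)
    (htrans : ∀ x ∈ sortedTuples S n, ∀ y ∈ sortedTuples S n, ∀ z ∈ sortedTuples S n,
      t x y → t y z → t x z)
    (hantisymm : ∀ x ∈ sortedTuples S n, ∀ y ∈ sortedTuples S n, t x y → t y x → x = y)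
    (htotal : ∀ x ∈ sortedTuples S n, ∀ y ∈ sortedTuples S n, t x y ∨ t y x)
    (hmono : ∀ x ∈ sortedTuples S n, ∀ y ∈ sortedTuples S n, (∀ i, x i ≤ y i) → t x y)
    (hneT : ∀ z ∈ sortedTuples S n, (intLikelySorted S n (upperSet S n t z) α).Nonempty)
    (hneL : ∀ z ∈ sortedTuples S n, (intLikelySorted S n (upperSet S n lexLowLE z) α).Nonempty)
    (hneH : ∀ z ∈ sortedTuples S n, (intLikelySorted S n (upperSet S n lexHighLE z) α).Nonempty)
    (x : Fin n → ↥S) (hx : x ∈ sortedTuples S n)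
    (s s' : ↥S)
    (h1 : t (fun _ => s) x) (h2 : t x (fun _ => s')) :
    pessimal S n lexHighLE α (fun _ => s) ≤ pessimal S n t α x ∧
      pessimal S n t α x ≤ pessimal S n lexLowLE α (fun _ => s') := by
  classical
  have hcs : (fun _ : Fin n => s) ∈ sortedTuples S n := monotone_const
  have hcs' : (fun _ : Fin n => s') ∈ sortedTuples S n := monotone_const
  have incl1 : upperSet S n t x ⊆ upperSet S n lexHighLE (fun _ => s) := by
    rintro y ⟨hy, hxy⟩
    have hy' : Monotone y := hy
    refine ⟨hy, ?_⟩
    have hty : t (fun _ => s) y := htrans _ hcs _ hx _ hy h1 hxy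
    by_cases heq : y = fun _ => s
    · exact Or.inl heq.symm
    · right
      have hDne : (Finset.univ.filter (fun i => y i ≠ s)).Nonempty := by
        by_contra h
        apply heq
        funext i
        by_contra hne
        exact h ⟨i, Finset.mem_filter.mpr ⟨Finset.mem_univ i, hne⟩⟩
      set i := (Finset.univ.filter (fun i => y i ≠ s)).max' hDne with hidef
      have hiD : y i ≠ s :=
        (Finset.mem_filter.mp (Finset.max'_mem _ hDne)).2
      have hgt : ∀ j, i < j → y j = s := by
        intro j hj
        by_contra hne
        exact absurd (Finset.le_max' _ j (Finset.mem_filter.mpr ⟨Finset.mem_univ j, hne⟩))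
          (not_le.mpr hj)
      rcases lt_or_gt_of_ne hiD with hlt | hgt'
      · exfalso
        have hle : ∀ k, y k ≤ (fun _ : Fin n => s) k := by
          intro k
          rcases le_or_gt k i with h | h
          · exact (hy' h).trans hlt.le
          · exact (hgt k h).le
        have hys : t y (fun _ => s) := hmono _ hy _ hcs hle
        have := hantisymm _ hcs _ hy hty hys
        exact heq this.symm
      · exact ⟨i, hgt', fun j hj => (hgt j hj).symm⟩
  have incl2 : upperSet S n lexLowLE (fun _ => s') ⊆ upperSet S n t x := by
    rintro y ⟨hy, hxy⟩
    have hy' : Monotone y := hy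
    refine ⟨hy, ?_⟩
    rcases hxy with heq | ⟨i, hilt, hjeq⟩
    · exact heq ▸ h2
    · have hs'le : ∀ k, (fun _ : Fin n => s') k ≤ y k := by
        intro k
        rcases lt_or_ge k i with h | h
        · exact (hjeq k h).le
        · exact hilt.le.trans (hy' (show i ≤ k from h))
      exact htrans _ hx _ hcs' _ hy h2 (hmono _ hcs' _ hy hs'le)
  exact ⟨pessimal_anti S hS n (hneT x hx) incl1,
    pessimal_anti S hS n (hneL _ hcs') incl2⟩

end
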